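/- Let α > 0 and let m, k be real numbers with k ≥ 2 and m > 2(α + 1). Then for every r > 0: −h″(r)/h(r) − m·f′(r)·h′(r)/(f(r)·h(r)) − k·G′(r)·h′(r)/(G(r)·h(r)) > 0, where f(r) = r·(1+r²)^(−1/4), G(r) = r/arctan r, and h(r) = (1+r²)^(−α/2). -/

import Mathlib

noncomputable def f (r : ℝ) : ℝ := r * (1 + r ^ 2) ^ (-(1 / 4 : ℝ))

noncomputable def G (r : ℝ) : ℝ := r / Real.arctan r

noncomputable def h (α r : ℝ) : ℝ := (1 + r ^ 2) ^ (-(α / 2))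

lemma one_add_sq_pos (r : ℝ) : (0:ℝ) < 1 + r ^ 2 := by positivity

lemma arctan_lower {r : ℝ} (hr : 0 < r) : r / (1 + r ^ 2) < Real.arctan r := by
  set φ : ℝ → ℝ := fun x => Real.arctan x - x / (1 + x ^ 2) with hφ
  have hder : ∀ x : ℝ, HasDerivAt φ (2 * x ^ 2 / (1 + x ^ 2) ^ 2) x := by
    intro x
    have h1 : HasDerivAt (fun x : ℝ => x / (1 + x ^ 2))
        ((1 * (1 + x ^ 2) - x * (2 * x)) / (1 + x ^ 2) ^ 2) x := by
      have hx : HasDerivAt (fun x : ℝ => x) 1 x := hasDerivAt_id x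
      have hden : HasDerivAt (fun x : ℝ => 1 + x ^ 2) (2 * x) x := by
        simpa using (hasDerivAt_pow 2 x).const_add 1
      exact hx.div hden (ne_of_gt (one_add_sq_pos x))
    have h2 := (Real.hasDerivAt_arctan x).sub h1
    refine h2.congr_deriv ?_
    field_simp
    ring
  have hmono : StrictMonoOn φ (Set.Ici (0:ℝ)) := by
    apply strictMonoOn_of_deriv_pos (convex_Ici 0)
    · exact Continuous.continuousOn (by
        apply Continuous.sub Real.continuous_arctan
        exact continuous_id.div (by continuity) (fun x => ne_of_gt (one_add_sq_pos x)))
    · intro x hx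
      rw [interior_Ici] at hx
      rw [(hder x).deriv]
      have : (0:ℝ) < x := hx
      positivity
  have h0 : φ 0 < φ r := hmono (by simp) (le_of_lt hr) hr
  have : φ 0 = 0 := by simp [hφ]
  rw [this] at h0
  simp only [hφ] at h0
  linarith

lemma hasDerivAt_h (α : ℝ) (r : ℝ) :
    HasDerivAt (h α) (-(α / 2) * (1 + r ^ 2) ^ (-(α / 2) - 1) * (2 * r)) r := by
  have hden : HasDerivAt (fun x : ℝ => 1 + x ^ 2) (2 * r) r := by
    simpa using (hasDerivAt_pow 2 r).const_add 1
  have := (Real.hasDerivAt_rpow_const (x := 1 + r ^ 2) (p := -(α / 2))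
    (Or.inl (ne_of_gt (one_add_sq_pos r)))).comp r hden
  show HasDerivAt (fun x => (1 + x ^ 2) ^ (-(α / 2))) _ r
  simpa [h, Function.comp_def, mul_comm, mul_assoc, mul_left_comm] using this

lemma deriv_h_eq (α : ℝ) : deriv (h α) = fun r => -α * r * (1 + r ^ 2) ^ (-(α / 2) - 1) := by
  funext r
  rw [(hasDerivAt_h α r).deriv]
  ring

lemma hasDerivAt_deriv_h (α : ℝ) (r : ℝ) :
    HasDerivAt (deriv (h α))
      (-α * (1 + r ^ 2) ^ (-(α / 2) - 1)
        + (-α * r) * ((-(α / 2) - 1) * (1 + r ^ 2) ^ (-(α / 2) - 1 - 1) * (2 * r))) r := by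
  rw [deriv_h_eq]
  have hden : HasDerivAt (fun x : ℝ => 1 + x ^ 2) (2 * r) r := by
    simpa using (hasDerivAt_pow 2 r).const_add 1
  have hpow := (Real.hasDerivAt_rpow_const (x := 1 + r ^ 2) (p := -(α / 2) - 1)
    (Or.inl (ne_of_gt (one_add_sq_pos r)))).comp r hden
  have hlin : HasDerivAt (fun x : ℝ => -α * x) (-α) r := by
    simpa using (hasDerivAt_id r).const_mul (-α)
  have := hlin.mul hpow
  convert this using 1 <;> rfl

lemma hasDerivAt_f (r : ℝ) :
    HasDerivAt f ((1 + r ^ 2) ^ (-(1 / 4 : ℝ))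
      + r * (-(1 / 4 : ℝ) * (1 + r ^ 2) ^ (-(1 / 4 : ℝ) - 1) * (2 * r))) r := by
  have hden : HasDerivAt (fun x : ℝ => 1 + x ^ 2) (2 * r) r := by
    simpa using (hasDerivAt_pow 2 r).const_add 1
  have hpow := (Real.hasDerivAt_rpow_const (x := 1 + r ^ 2) (p := -(1 / 4 : ℝ))
    (Or.inl (ne_of_gt (one_add_sq_pos r)))).comp r hden
  have h2 := (hasDerivAt_id r).mul hpow
  have h3 : HasDerivAt (fun y : ℝ => y * (1 + y ^ 2) ^ (-(1 / 4 : ℝ)))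
      ((1 + r ^ 2) ^ (-(1 / 4 : ℝ))
        + r * (-(1 / 4 : ℝ) * (1 + r ^ 2) ^ (-(1 / 4 : ℝ) - 1) * (2 * r))) r := by
    refine h2.congr_deriv ?_
    first
      | (simp only [Function.comp_def, id]; ring)
      | simp [Function.comp]
  exact h3

lemma hasDerivAt_G {r : ℝ} (hr : 0 < r) :
    HasDerivAt G ((Real.arctan r - r * (1 / (1 + r ^ 2))) / Real.arctan r ^ 2) r := by
  have hT : 0 < Real.arctan r := by
    have := Real.arctan_strictMono hr
    simpa using this
  have := (hasDerivAt_id r).div (Real.hasDerivAt_arctan r) (ne_of_gt hT)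
  show HasDerivAt (fun x => x / Real.arctan x) _ r
  simpa [G, Pi.div_def] using this

/-- Ricci curvature positivity in the `S¹` direction: if `k ≥ 2` and `m > 2(α+1)`, then
`−h″/h − m·f′h′/(fh) − k·G′h′/(Gh) > 0` for all `r > 0`. -/
theorem statement13 (α : ℝ) (hα : 0 < α) (m k : ℝ) (hk : 2 ≤ k)
    (hm : m > 2 * (α + 1)) :
    ∀ r : ℝ, 0 < r →
      -(deriv (deriv (h α)) r / h α r)
        - m * (deriv f r * deriv (h α) r / (f r * h α r))
        - k * (deriv G r * deriv (h α) r / (G r * h α r)) > 0 := by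
  intro r hr
  have ht : (0:ℝ) < 1 + r ^ 2 := one_add_sq_pos r
  have hT : 0 < Real.arctan r := by
    have := Real.arctan_strictMono hr
    simpa using this
  have harc : r / (1 + r ^ 2) < Real.arctan r := arctan_lower hr
  have harc' : r < Real.arctan r * (1 + r ^ 2) := by
    have := (div_lt_iff₀ ht).mp harc
    linarith
  have r1 : (1 + r ^ 2) ^ (-(α / 2) - 1) = (1 + r ^ 2) ^ (-(α / 2)) / (1 + r ^ 2) := by
    rw [Real.rpow_sub ht, Real.rpow_one]
  have r2 : (1 + r ^ 2) ^ (-(α / 2) - 1 - 1)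
      = (1 + r ^ 2) ^ (-(α / 2)) / (1 + r ^ 2) / (1 + r ^ 2) := by
    rw [Real.rpow_sub ht, Real.rpow_sub ht, Real.rpow_one]
  have r3 : (1 + r ^ 2) ^ (-(1 / 4 : ℝ) - 1) = (1 + r ^ 2) ^ (-(1 / 4 : ℝ)) / (1 + r ^ 2) := by
    rw [Real.rpow_sub ht, Real.rpow_one]
  rw [(hasDerivAt_deriv_h α r).deriv, (hasDerivAt_h α r).deriv, (hasDerivAt_f r).deriv,
    (hasDerivAt_G hr).deriv, r2, r1, r3]
  rw [show h α r = (1 + r ^ 2) ^ (-(α / 2)) from rfl,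
      show f r = r * (1 + r ^ 2) ^ (-(1 / 4 : ℝ)) from rfl,
      show G r = r / Real.arctan r from rfl]
  have hA : (0:ℝ) < (1 + r ^ 2) ^ (-(α / 2)) := Real.rpow_pos_of_pos ht _
  have hB : (0:ℝ) < (1 + r ^ 2) ^ (-(1 / 4 : ℝ)) := Real.rpow_pos_of_pos ht _
  have hN : 0 < α * (2 * Real.arctan r * ((1 + r ^ 2) - (α + 2) * r ^ 2)
      + m * Real.arctan r * (2 * (1 + r ^ 2) - r ^ 2)
      + 2 * k * (Real.arctan r * (1 + r ^ 2) - r)) := by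
    apply mul_pos hα
    nlinarith [mul_pos (mul_pos hT (show (0:ℝ) < m - 2 * (α + 1) by linarith))
        (show (0:ℝ) < 2 + r ^ 2 by positivity),
      mul_pos (show (0:ℝ) < k by linarith)
        (show (0:ℝ) < Real.arctan r * (1 + r ^ 2) - r by linarith),
      mul_pos hα hT, hT]
  have h2 : 0 < α * (2 * Real.arctan r * ((1 + r ^ 2) - (α + 2) * r ^ 2)
      + m * Real.arctan r * (2 * (1 + r ^ 2) - r ^ 2)
      + 2 * k * (Real.arctan r * (1 + r ^ 2) - r))
      / (2 * (1 + r ^ 2) ^ 2 * Real.arctan r) := div_pos hN (by positivity)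
  rw [gt_iff_lt]
  convert h2 using 1
  field_simp
  ring
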